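/- Let n ≥ 1 and let z ∈ S_n be an involution (z = z^{-1}). Define the orthogonal Rothe diagram D^O(z) = {(i, z(j)) : z(i) > z(j) ≤ i < j}. If z is vexillary, i.e., the essential set Ess(D^O(z)) = {(i,j) ∈ D^O(z) : (i, j+1) ∉ D^O(z) and (i+1, j) ∉ D^O(z)} forms a chain under the partial order (a,b) ⪯ (i,j) ⟺ i ≤ a and b ≤ j, write Ess(D^O(z)) = {(i_1,j_1) ⪯ ⋯ ⪯ (i_s,j_s)}. Setting k_t = j_t - rank(z_{[i_t][j_t]}) (where z_{[i][j]} is the upper-left i×j submatrix of the permutation matrix of z), the sequence k_1 ≤ k_2 ≤ ⋯ ≤ k_s is weakly increasing, and the sequence λ_k = i_t - j_t + 1 + k_t - k for k_{t-1} < k ≤ k_t (with k_0 = 0) defines a partition, i.e., is weakly decreasing and positive. -/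

import Mathlib

/-- The orthogonal Rothe diagram `D^O(z) = {(i, z(j)) : z(i) > z(j) ≤ i < j}`
of an involution `z` of `{1,…,n}`. -/
def rotheO (n : ℕ) (z : ℕ → ℕ) : Set (ℕ × ℕ) :=
  {p | ∃ i j, 1 ≤ i ∧ i < j ∧ j ≤ n ∧ z j ≤ i ∧ z j < z i ∧ p = (i, z j)}

/-- The essential set of a diagram `D`:
`{(i,j) ∈ D : (i, j+1) ∉ D and (i+1, j) ∉ D}`. -/
def essSet (D : Set (ℕ × ℕ)) : Set (ℕ × ℕ) :=
  {p | p ∈ D ∧ (p.1, p.2 + 1) ∉ D ∧ (p.1 + 1, p.2) ∉ D}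

/-- `rank(z_{[i][j]}) = #{a ≤ i : z(a) ≤ j}`, the rank of the upper-left
`i×j` submatrix of the permutation matrix of `z`. -/
def rkUL (z : ℕ → ℕ) (i j : ℕ) : ℕ :=
  ((Finset.Icc 1 i).filter fun a => z a ≤ j).card

lemma rkUL_mono_i (z : ℕ → ℕ) {i i' : ℕ} (h : i ≤ i') (j : ℕ) :
    rkUL z i j ≤ rkUL z i' j := by
  apply Finset.card_le_card
  apply Finset.filter_subset_filter
  exact Finset.Icc_subset_Icc_right h

lemma rkUL_mono_j (z : ℕ → ℕ) (i : ℕ) {j j' : ℕ} (h : j ≤ j') :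
    rkUL z i j ≤ rkUL z i j' := by
  apply Finset.card_le_card
  intro a ha
  simp only [Finset.mem_filter] at ha ⊢
  exact ⟨ha.1, ha.2.trans h⟩

lemma rkUL_add_i (z : ℕ → ℕ) {i i' : ℕ} (h : i' ≤ i) (j : ℕ) :
    rkUL z i j ≤ rkUL z i' j + (i - i') := by
  have hsub : (Finset.Icc 1 i).filter (fun a => z a ≤ j) ⊆
      (Finset.Icc 1 i').filter (fun a => z a ≤ j) ∪ Finset.Icc (i' + 1) i := by
    intro a ha
    simp only [Finset.mem_filter, Finset.mem_Icc, Finset.mem_union] at ha ⊢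
    omega
  calc rkUL z i j ≤ _ := Finset.card_le_card hsub
    _ ≤ _ + _ := Finset.card_union_le _ _
    _ ≤ rkUL z i' j + (i - i') := by unfold rkUL; rw [Nat.card_Icc]; omega

lemma rkUL_add_j (n : ℕ) (z : ℕ → ℕ)
    (hz_inv : ∀ a, 1 ≤ a → a ≤ n → z (z a) = a)
    {i j j' : ℕ} (hin : i ≤ n) (h : j ≤ j') :
    rkUL z i j' ≤ rkUL z i j + (j' - j) := by
  have hsub : (Finset.Icc 1 i).filter (fun a => z a ≤ j') ⊆
      (Finset.Icc 1 i).filter (fun a => z a ≤ j) ∪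
      (Finset.Icc 1 i).filter (fun a => j < z a ∧ z a ≤ j') := by
    intro a ha
    simp only [Finset.mem_filter, Finset.mem_Icc, Finset.mem_union] at ha ⊢
    omega
  have hcard : ((Finset.Icc 1 i).filter (fun a => j < z a ∧ z a ≤ j')).card ≤ j' - j := by
    have := Finset.card_le_card_of_injOn z
      (s := (Finset.Icc 1 i).filter (fun a => j < z a ∧ z a ≤ j'))
      (t := Finset.Icc (j + 1) j')
      (by intro a ha
          simp only [Finset.mem_coe, Finset.mem_filter, Finset.mem_Icc] at ha ⊢
          omega)
      (by intro a ha b hb hab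
          simp only [Finset.coe_filter, Finset.mem_Icc, Set.mem_setOf_eq] at ha hb
          have h1 : z (z a) = a := hz_inv a ha.1.1 (ha.1.2.trans hin)
          have h2 : z (z b) = b := hz_inv b hb.1.1 (hb.1.2.trans hin)
          rw [← h1, ← h2, hab])
    rw [Nat.card_Icc] at this
    omega
  calc rkUL z i j' ≤ _ := Finset.card_le_card hsub
    _ ≤ _ + _ := Finset.card_union_le _ _
    _ ≤ rkUL z i j + (j' - j) := Nat.add_le_add_left hcard _

lemma rkUL_le (n : ℕ) (z : ℕ → ℕ)
    (hz_range : ∀ a, 1 ≤ a → a ≤ n → 1 ≤ z a ∧ z a ≤ n)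
    (hz_inv : ∀ a, 1 ≤ a → a ≤ n → z (z a) = a)
    {i : ℕ} (j : ℕ) (hin : i ≤ n) : rkUL z i j ≤ j := by
  have := Finset.card_le_card_of_injOn z
    (s := (Finset.Icc 1 i).filter (fun a => z a ≤ j))
    (t := Finset.Icc 1 j)
    (by intro a ha
        simp only [Finset.mem_coe, Finset.mem_filter, Finset.mem_Icc] at ha ⊢
        exact ⟨(hz_range a ha.1.1 (ha.1.2.trans hin)).1, ha.2⟩)
    (by intro a ha b hb hab
        simp only [Finset.coe_filter, Finset.mem_Icc, Set.mem_setOf_eq] at ha hb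
        have h1 : z (z a) = a := hz_inv a ha.1.1 (ha.1.2.trans hin)
        have h2 : z (z b) = b := hz_inv b hb.1.1 (hb.1.2.trans hin)
        rw [← h1, ← h2, hab])
  rw [Nat.card_Icc] at this
  simpa [rkUL] using this.trans (by omega)

theorem stmt13 (n s : ℕ) (hn : 1 ≤ n) (z : ℕ → ℕ)
    (hz_range : ∀ i, 1 ≤ i → i ≤ n → 1 ≤ z i ∧ z i ≤ n)
    (hz_inv : ∀ i, 1 ≤ i → i ≤ n → z (z i) = i)
    (iSeq jSeq : ℕ → ℕ)
    (hEss : essSet (rotheO n z) = {p | ∃ t, 1 ≤ t ∧ t ≤ s ∧ p = (iSeq t, jSeq t)})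
    (hchain : ∀ t t', 1 ≤ t → t ≤ t' → t' ≤ s →
      iSeq t' ≤ iSeq t ∧ jSeq t ≤ jSeq t') :
    let kk : ℕ → ℕ := fun t =>
      if t = 0 then 0 else jSeq t - rkUL z (iSeq t) (jSeq t)
    (∀ t, 1 ≤ t → t < s → kk t ≤ kk (t + 1)) ∧
    (∀ t m, 1 ≤ t → t ≤ s → kk (t - 1) < m → m ≤ kk t →
      0 < (iSeq t : ℤ) - (jSeq t : ℤ) + 1 + (kk t : ℤ) - (m : ℤ)) ∧
    (∀ t t' m m', 1 ≤ t → t ≤ t' → t' ≤ s →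
      kk (t - 1) < m → m ≤ kk t → kk (t' - 1) < m' → m' ≤ kk t' → m ≤ m' →
      (iSeq t' : ℤ) - (jSeq t' : ℤ) + 1 + (kk t' : ℤ) - (m' : ℤ) ≤
        (iSeq t : ℤ) - (jSeq t : ℤ) + 1 + (kk t : ℤ) - (m : ℤ)) := by
  intro kk
  have hbox : ∀ t, 1 ≤ t → t ≤ s →
      jSeq t ≤ iSeq t ∧ 1 ≤ jSeq t ∧ iSeq t ≤ n := by
    intro t ht hts
    have hmem : (iSeq t, jSeq t) ∈ essSet (rotheO n z) := by
      rw [hEss]; exact ⟨t, ht, hts, rfl⟩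
    obtain ⟨⟨i, j, h1, h2, h3, h4, h5, h6⟩, -, -⟩ := hmem
    have e1 : iSeq t = i := congrArg Prod.fst h6
    have e2 : jSeq t = z j := congrArg Prod.snd h6
    have hj1 : 1 ≤ z j := (hz_range j (by omega) h3).1
    omega
  have hrk : ∀ t, 1 ≤ t → t ≤ s → rkUL z (iSeq t) (jSeq t) ≤ jSeq t := fun t ht hts =>
    rkUL_le n z hz_range hz_inv _ (hbox t ht hts).2.2
  have hkk : ∀ t, t ≠ 0 → kk t = jSeq t - rkUL z (iSeq t) (jSeq t) :=
    fun t ht => if_neg ht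
  have hstep : ∀ t, 1 ≤ t → t < s → kk t ≤ kk (t + 1) := by
    intro t ht hts
    obtain ⟨hi, hj⟩ := hchain t (t + 1) ht (by omega) (by omega)
    have h1 : rkUL z (iSeq (t + 1)) (jSeq (t + 1)) ≤ rkUL z (iSeq t) (jSeq (t + 1)) :=
      rkUL_mono_i z hi _
    have h2 : rkUL z (iSeq t) (jSeq (t + 1)) ≤
        rkUL z (iSeq t) (jSeq t) + (jSeq (t + 1) - jSeq t) :=
      rkUL_add_j n z hz_inv (hbox t ht (by omega)).2.2 hj
    have h3 := hrk t ht (by omega)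
    have h4 := hrk (t + 1) (by omega) (by omega)
    rw [hkk t (by omega), hkk (t + 1) (by omega)]
    omega
  have hmono : ∀ t' t, 1 ≤ t → t ≤ t' → t' ≤ s → kk t ≤ kk t' := by
    intro t'
    induction t' with
    | zero => intro t ht htt' _; omega
    | succ u ih =>
      intro t ht htt' hs'
      rcases Nat.lt_or_ge t (u + 1) with h | h
      · have h1 : kk t ≤ kk u := ih t ht (by omega) (by omega)
        have h2 : kk u ≤ kk (u + 1) := hstep u (by omega) (by omega)
        omega
      · have he : t = u + 1 := by omega
        rw [he]
  refine ⟨hstep, ?_, ?_⟩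
  · intro t m ht hts hm1 hm2
    have hb := hbox t ht hts
    have hr := hrk t ht hts
    have hk := hkk t (by omega)
    omega
  · intro t t' m m' ht htt' hts hm1 hm2 hm1' hm2' hmm
    rcases eq_or_lt_of_le htt' with rfl | hlt
    · omega
    · have hu1 : 1 ≤ t' - 1 := by omega
      obtain ⟨hi, hj⟩ := hchain (t' - 1) t' hu1 (by omega) hts
      have h1 : rkUL z (iSeq (t' - 1)) (jSeq (t' - 1)) ≤ rkUL z (iSeq (t' - 1)) (jSeq t') :=
        rkUL_mono_j z _ hj
      have h2 : rkUL z (iSeq (t' - 1)) (jSeq t') ≤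
          rkUL z (iSeq t') (jSeq t') + (iSeq (t' - 1) - iSeq t') :=
        rkUL_add_i z hi _
      obtain ⟨hci, hcj⟩ := hchain t (t' - 1) ht (by omega) (by omega)
      have hk1 : kk t ≤ kk (t' - 1) := hmono (t' - 1) t ht (by omega) (by omega)
      have hkt := hkk t (by omega)
      have hkt' := hkk t' (by omega)
      have hku := hkk (t' - 1) (by omega)
      have hrt := hrk t ht (by omega)
      have hrt' := hrk t' (by omega) hts
      have hru := hrk (t' - 1) hu1 (by omega)
      omega
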